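/- arXiv:1211.0089 — 8 statements merged into one kernel-verified Lean document; each statement's English description precedes it below -/
import Mathlib

section
/- For all a, b > 0 with a ≠ b, the inequality H(a,b)^α · Q(a,b)^(1-α) < M(a,b) holds if and only if α ≥ 2/9, where the inequality is required for all such a, b. -/
set_option maxHeartbeats 4000000

noncomputable def M (a b : ℝ) : ℝ := (a - b) / (2 * Real.arsinh ((a - b) / (a + b)))
noncomputable def H (a b : ℝ) : ℝ := 2 * a * b / (a + b)
noncomputable def Q (a b : ℝ) : ℝ := Real.sqrt ((a ^ 2 + b ^ 2) / 2)

lemma polyD {x : ℝ} (h0 : 0 < x) (h1 : x < 1) :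
    (1 - x/6 + 3*x^2/40)^18 * (1-x)^4 * (1+x)^7 < 1 := by
  have h2 : (0:ℝ) < 1 - x := by linarith
  have key : 1 - (1 - x/6 + 3*x^2/40)^18 * (1-x)^4 * (1+x)^7 = (22/5 : ℝ) * (x^2 * (1-x)^45) + (70849/360 : ℝ) * (x^3 * (1-x)^44) + (61868287/14400 : ℝ) * (x^4 * (1-x)^43) + (263566787/4320 : ℝ) * (x^5 * (1-x)^42) + (307967916347/486000 : ℝ) * (x^6 * (1-x)^41) + (1108522450063/216000 : ℝ) * (x^7 * (1-x)^40) + (3148434230099459/93312000 : ℝ) * (x^8 * (1-x)^39) + (466387696027142933/2519424000 : ℝ) * (x^9 * (1-x)^38) + (54460426051395385669/62985600000 : ℝ) * (x^10 * (1-x)^37) + (1758820946824673462509/503884800000 : ℝ) * (x^11 * (1-x)^36) + (2235223916714086867036297/181398528000000 : ℝ) * (x^12 * (1-x)^35) + (1741184669951969174397703/45349632000000 : ℝ) * (x^13 * (1-x)^34) + (144742571207119375968108473/1360488960000000 : ℝ) * (x^14 * (1-x)^33) + (5167673838992146831505722663/19591041024000000 : ℝ) * (x^15 * (1-x)^32)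 + (3072507147311204618183295446323/5224277606400000000 : ℝ) * (x^16 * (1-x)^31) + (55675185805181976957744560822153/47018498457600000000 : ℝ) * (x^17 * (1-x)^30) + (2742443553102306119550974861192503/1269499458355200000000 : ℝ) * (x^18 * (1-x)^29) + (36370443856483519768652208401285743/10155995666841600000000 : ℝ) * (x^19 * (1-x)^28) + (3660838711406148257149414181825195827/677066377789440000000000 : ℝ) * (x^20 * (1-x)^27) + (7564672376952661961767937996567639561/1015599566684160000000000 : ℝ) * (x^21 * (1-x)^26) + (5951084071726022666026439993084433763/634749729177600000000000 : ℝ) * (x^22 * (1-x)^25) + (73081341793848489557899693339094717177/6770663777894400000000000 : ℝ) * (x^23 * (1-x)^24) + (18482028918705241181903225339165828605331/1624959306694656000000000000 : ℝ) * (x^24 * (1-x)^23) + (3566231775719252813583955956604295860007/324991861338931200000000000 : ℝ) * (x^25 * (1-x)^22) + (2916880638751336568435640973170982416781/300918390128640000000000000 : ℝ) * (x^26 * (1-x)^21) + (509413566352618001654655618032399109186679/64998372267786240000000000000 : ℝ) * (x^27 * (1-x)^20) + (3013982729242456453803543439909598480866339/519986978142289920000000000000 : ℝ) * (x^28 * (1-x)^19)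 + (84870586322171669480536327100904638462389/21666124089262080000000000000 : ℝ) * (x^29 * (1-x)^18) + (15702075785976528566859645035701484150928763/6499837226778624000000000000000 : ℝ) * (x^30 * (1-x)^17) + (70567350101591772266459704162193870687596453/51998697814228992000000000000000 : ℝ) * (x^31 * (1-x)^16) + (3843247178879162050383422330232421513987182821/5546527766851092480000000000000000 : ℝ) * (x^32 * (1-x)^15) + (5335829717563287135544576516635232985954214793/16639583300553277440000000000000000 : ℝ) * (x^33 * (1-x)^14) + (11153703735207308781419763376772993743935293473/83197916502766387200000000000000000 : ℝ) * (x^34 * (1-x)^13) + (27623898676403506571647824340735049653940023/547805211540848640000000000000000 : ℝ) * (x^35 * (1-x)^12) + (452111195816824238871409825338632436201872465159/26623333280885243904000000000000000000 : ℝ) * (x^36 * (1-x)^11) + (67750817853997484571133697118754619696636789873/13311666640442621952000000000000000000 : ℝ) * (x^37 * (1-x)^10) + (2989865862315241392656402826593302212646088753/2218611106740436992000000000000000000 : ℝ) * (x^38 * (1-x)^9) + (207918823121916476826270246723971304385415441/665583332022131097600000000000000000 : ℝ) * (x^39 * (1-x)^8) + (20855536495580770467797124208707971105384753/332791666011065548800000000000000000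 : ℝ) * (x^40 * (1-x)^7) + (2972934816100433695892870790597946254883313/277326388342554624000000000000000000 : ℝ) * (x^41 * (1-x)^6) + (637726875802663743777092233218349361876273/415989582513831936000000000000000000 : ℝ) * (x^42 * (1-x)^5) + (37094273822122529962900388969342402446679/207994791256915968000000000000000000 : ℝ) * (x^43 * (1-x)^4) + (16215 : ℝ) * (x^44 * (1-x)^3) + (1081 : ℝ) * (x^45 * (1-x)^2) + (47 : ℝ) * (x^46 * (1-x)^1) + (1 : ℝ) * (x^47 * (1-x)^0) := by ring
  have T2 : (0:ℝ) < (22/5 : ℝ) * (x^2 * (1-x)^45) := mul_pos (by norm_num) (mul_pos (pow_pos h0 2) (pow_pos h2 45))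
  have T3 : (0:ℝ) < (70849/360 : ℝ) * (x^3 * (1-x)^44) := mul_pos (by norm_num) (mul_pos (pow_pos h0 3) (pow_pos h2 44))
  have T4 : (0:ℝ) < (61868287/14400 : ℝ) * (x^4 * (1-x)^43) := mul_pos (by norm_num) (mul_pos (pow_pos h0 4) (pow_pos h2 43))
  have T5 : (0:ℝ) < (263566787/4320 : ℝ) * (x^5 * (1-x)^42) := mul_pos (by norm_num) (mul_pos (pow_pos h0 5) (pow_pos h2 42))
  have T6 : (0:ℝ) < (307967916347/486000 : ℝ) * (x^6 * (1-x)^41) := mul_pos (by norm_num) (mul_pos (pow_pos h0 6) (pow_pos h2 41))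
  have T7 : (0:ℝ) < (1108522450063/216000 : ℝ) * (x^7 * (1-x)^40) := mul_pos (by norm_num) (mul_pos (pow_pos h0 7) (pow_pos h2 40))
  have T8 : (0:ℝ) < (3148434230099459/93312000 : ℝ) * (x^8 * (1-x)^39) := mul_pos (by norm_num) (mul_pos (pow_pos h0 8) (pow_pos h2 39))
  have T9 : (0:ℝ) < (466387696027142933/2519424000 : ℝ) * (x^9 * (1-x)^38) := mul_pos (by norm_num) (mul_pos (pow_pos h0 9) (pow_pos h2 38))
  have T10 : (0:ℝ) < (54460426051395385669/62985600000 : ℝ) * (x^10 * (1-x)^37) := mul_pos (by norm_num) (mul_pos (pow_pos h0 10) (pow_pos h2 37))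
  have T11 : (0:ℝ) < (1758820946824673462509/503884800000 : ℝ) * (x^11 * (1-x)^36) := mul_pos (by norm_num) (mul_pos (pow_pos h0 11) (pow_pos h2 36))
  have T12 : (0:ℝ) < (2235223916714086867036297/181398528000000 : ℝ) * (x^12 * (1-x)^35) := mul_pos (by norm_num) (mul_pos (pow_pos h0 12) (pow_pos h2 35))
  have T13 : (0:ℝ) < (1741184669951969174397703/45349632000000 : ℝ) * (x^13 * (1-x)^34) := mul_pos (by norm_num) (mul_pos (pow_pos h0 13) (pow_pos h2 34))
  have T14 : (0:ℝ) < (144742571207119375968108473/1360488960000000 : ℝ) * (x^14 * (1-x)^33) := mul_pos (by norm_num) (mul_pos (pow_pos h0 14) (pow_pos h2 33))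
  have T15 : (0:ℝ) < (5167673838992146831505722663/19591041024000000 : ℝ) * (x^15 * (1-x)^32) := mul_pos (by norm_num) (mul_pos (pow_pos h0 15) (pow_pos h2 32))
  have T16 : (0:ℝ) < (3072507147311204618183295446323/5224277606400000000 : ℝ) * (x^16 * (1-x)^31) := mul_pos (by norm_num) (mul_pos (pow_pos h0 16) (pow_pos h2 31))
  have T17 : (0:ℝ) < (55675185805181976957744560822153/47018498457600000000 : ℝ) * (x^17 * (1-x)^30) := mul_pos (by norm_num) (mul_pos (pow_pos h0 17) (pow_pos h2 30))
  have T18 : (0:ℝ) < (2742443553102306119550974861192503/1269499458355200000000 : ℝ) * (x^18 * (1-x)^29) := mul_pos (by norm_num) (mul_pos (pow_pos h0 18) (pow_pos h2 29))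
  have T19 : (0:ℝ) < (36370443856483519768652208401285743/10155995666841600000000 : ℝ) * (x^19 * (1-x)^28) := mul_pos (by norm_num) (mul_pos (pow_pos h0 19) (pow_pos h2 28))
  have T20 : (0:ℝ) < (3660838711406148257149414181825195827/677066377789440000000000 : ℝ) * (x^20 * (1-x)^27) := mul_pos (by norm_num) (mul_pos (pow_pos h0 20) (pow_pos h2 27))
  have T21 : (0:ℝ) < (7564672376952661961767937996567639561/1015599566684160000000000 : ℝ) * (x^21 * (1-x)^26) := mul_pos (by norm_num) (mul_pos (pow_pos h0 21) (pow_pos h2 26))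
  have T22 : (0:ℝ) < (5951084071726022666026439993084433763/634749729177600000000000 : ℝ) * (x^22 * (1-x)^25) := mul_pos (by norm_num) (mul_pos (pow_pos h0 22) (pow_pos h2 25))
  have T23 : (0:ℝ) < (73081341793848489557899693339094717177/6770663777894400000000000 : ℝ) * (x^23 * (1-x)^24) := mul_pos (by norm_num) (mul_pos (pow_pos h0 23) (pow_pos h2 24))
  have T24 : (0:ℝ) < (18482028918705241181903225339165828605331/1624959306694656000000000000 : ℝ) * (x^24 * (1-x)^23) := mul_pos (by norm_num) (mul_pos (pow_pos h0 24) (pow_pos h2 23))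
  have T25 : (0:ℝ) < (3566231775719252813583955956604295860007/324991861338931200000000000 : ℝ) * (x^25 * (1-x)^22) := mul_pos (by norm_num) (mul_pos (pow_pos h0 25) (pow_pos h2 22))
  have T26 : (0:ℝ) < (2916880638751336568435640973170982416781/300918390128640000000000000 : ℝ) * (x^26 * (1-x)^21) := mul_pos (by norm_num) (mul_pos (pow_pos h0 26) (pow_pos h2 21))
  have T27 : (0:ℝ) < (509413566352618001654655618032399109186679/64998372267786240000000000000 : ℝ) * (x^27 * (1-x)^20) := mul_pos (by norm_num) (mul_pos (pow_pos h0 27) (pow_pos h2 20))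
  have T28 : (0:ℝ) < (3013982729242456453803543439909598480866339/519986978142289920000000000000 : ℝ) * (x^28 * (1-x)^19) := mul_pos (by norm_num) (mul_pos (pow_pos h0 28) (pow_pos h2 19))
  have T29 : (0:ℝ) < (84870586322171669480536327100904638462389/21666124089262080000000000000 : ℝ) * (x^29 * (1-x)^18) := mul_pos (by norm_num) (mul_pos (pow_pos h0 29) (pow_pos h2 18))
  have T30 : (0:ℝ) < (15702075785976528566859645035701484150928763/6499837226778624000000000000000 : ℝ) * (x^30 * (1-x)^17) := mul_pos (by norm_num) (mul_pos (pow_pos h0 30) (pow_pos h2 17))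
  have T31 : (0:ℝ) < (70567350101591772266459704162193870687596453/51998697814228992000000000000000 : ℝ) * (x^31 * (1-x)^16) := mul_pos (by norm_num) (mul_pos (pow_pos h0 31) (pow_pos h2 16))
  have T32 : (0:ℝ) < (3843247178879162050383422330232421513987182821/5546527766851092480000000000000000 : ℝ) * (x^32 * (1-x)^15) := mul_pos (by norm_num) (mul_pos (pow_pos h0 32) (pow_pos h2 15))
  have T33 : (0:ℝ) < (5335829717563287135544576516635232985954214793/16639583300553277440000000000000000 : ℝ) * (x^33 * (1-x)^14) := mul_pos (by norm_num) (mul_pos (pow_pos h0 33) (pow_pos h2 14))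
  have T34 : (0:ℝ) < (11153703735207308781419763376772993743935293473/83197916502766387200000000000000000 : ℝ) * (x^34 * (1-x)^13) := mul_pos (by norm_num) (mul_pos (pow_pos h0 34) (pow_pos h2 13))
  have T35 : (0:ℝ) < (27623898676403506571647824340735049653940023/547805211540848640000000000000000 : ℝ) * (x^35 * (1-x)^12) := mul_pos (by norm_num) (mul_pos (pow_pos h0 35) (pow_pos h2 12))
  have T36 : (0:ℝ) < (452111195816824238871409825338632436201872465159/26623333280885243904000000000000000000 : ℝ) * (x^36 * (1-x)^11) := mul_pos (by norm_num) (mul_pos (pow_pos h0 36) (pow_pos h2 11))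
  have T37 : (0:ℝ) < (67750817853997484571133697118754619696636789873/13311666640442621952000000000000000000 : ℝ) * (x^37 * (1-x)^10) := mul_pos (by norm_num) (mul_pos (pow_pos h0 37) (pow_pos h2 10))
  have T38 : (0:ℝ) < (2989865862315241392656402826593302212646088753/2218611106740436992000000000000000000 : ℝ) * (x^38 * (1-x)^9) := mul_pos (by norm_num) (mul_pos (pow_pos h0 38) (pow_pos h2 9))
  have T39 : (0:ℝ) < (207918823121916476826270246723971304385415441/665583332022131097600000000000000000 : ℝ) * (x^39 * (1-x)^8) := mul_pos (by norm_num) (mul_pos (pow_pos h0 39) (pow_pos h2 8))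
  have T40 : (0:ℝ) < (20855536495580770467797124208707971105384753/332791666011065548800000000000000000 : ℝ) * (x^40 * (1-x)^7) := mul_pos (by norm_num) (mul_pos (pow_pos h0 40) (pow_pos h2 7))
  have T41 : (0:ℝ) < (2972934816100433695892870790597946254883313/277326388342554624000000000000000000 : ℝ) * (x^41 * (1-x)^6) := mul_pos (by norm_num) (mul_pos (pow_pos h0 41) (pow_pos h2 6))
  have T42 : (0:ℝ) < (637726875802663743777092233218349361876273/415989582513831936000000000000000000 : ℝ) * (x^42 * (1-x)^5) := mul_pos (by norm_num) (mul_pos (pow_pos h0 42) (pow_pos h2 5))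
  have T43 : (0:ℝ) < (37094273822122529962900388969342402446679/207994791256915968000000000000000000 : ℝ) * (x^43 * (1-x)^4) := mul_pos (by norm_num) (mul_pos (pow_pos h0 43) (pow_pos h2 4))
  have T44 : (0:ℝ) < (16215 : ℝ) * (x^44 * (1-x)^3) := mul_pos (by norm_num) (mul_pos (pow_pos h0 44) (pow_pos h2 3))
  have T45 : (0:ℝ) < (1081 : ℝ) * (x^45 * (1-x)^2) := mul_pos (by norm_num) (mul_pos (pow_pos h0 45) (pow_pos h2 2))
  have T46 : (0:ℝ) < (47 : ℝ) * (x^46 * (1-x)^1) := mul_pos (by norm_num) (mul_pos (pow_pos h0 46) (pow_pos h2 1))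
  have T47 : (0:ℝ) < (1 : ℝ) * (x^47 * (1-x)^0) := mul_pos (by norm_num) (mul_pos (pow_pos h0 47) (pow_pos h2 0))
  linarith


lemma arsinh_lb {t : ℝ} (ht : 0 ≤ t) : t - t^3/6 ≤ Real.arsinh t := by
  set f : ℝ → ℝ := fun y => Real.arsinh y - (y - y^3/6) with hf
  have hder : ∀ x : ℝ, HasDerivAt f ((Real.sqrt (1+x^2))⁻¹ - (1 - x^2/2)) x := by
    intro x
    have h1 := Real.hasDerivAt_arsinh x
    have h2 : HasDerivAt (fun y : ℝ => y - y^3/6) (1 - x^2/2) x := by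
      have h3 := ((hasDerivAt_pow 3 x).div_const 6)
      have h4 := (hasDerivAt_id' x).sub h3
      refine h4.congr_deriv ?_
      norm_num
      ring
    exact h1.sub h2
  have mono : MonotoneOn f (Set.Ici 0) := by
    apply monotoneOn_of_deriv_nonneg (convex_Ici 0)
    · exact (Real.continuous_arsinh.sub (by continuity)).continuousOn
    · intro x hx
      exact ((hder x).differentiableAt).differentiableWithinAt
    · intro x hx
      rw [(hder x).deriv]
      have hx0 : (0:ℝ) < 1 + x^2 := by positivity
      set s := Real.sqrt (1+x^2) with hs
      have hs2 : s^2 = 1 + x^2 := Real.sq_sqrt hx0.le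
      have hs0 : 0 < s := Real.sqrt_pos.mpr hx0
      have hsinv : 0 < s⁻¹ := by positivity
      have : 1 - x^2/2 ≤ s⁻¹ := by
        rcases le_or_gt (1 - x^2/2) 0 with h | h
        · linarith
        · have hp2 : ((1 - x^2/2) * s)^2 ≤ 1 := by
            rw [mul_pow, hs2]
            nlinarith [sq_nonneg x, sq_nonneg (x^2), mul_pos (mul_pos h h) hx0]
          have key : (1 - x^2/2) * s ≤ 1 := by
            nlinarith [mul_pos h hs0]
          calc 1 - x^2/2 = ((1 - x^2/2) * s) * s⁻¹ := by field_simp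
            _ ≤ 1 * s⁻¹ := mul_le_mul_of_nonneg_right key hsinv.le
            _ = s⁻¹ := one_mul _
      linarith
  have h0 : f 0 = 0 := by simp [hf]
  have := mono (Set.self_mem_Ici) (Set.mem_Ici.mpr ht) ht
  rw [h0] at this
  simp only [hf] at this
  linarith

lemma arsinh_ub {t : ℝ} (ht : 0 ≤ t) (ht1 : t ≤ 1) :
    Real.arsinh t ≤ t - t^3/6 + 3*t^5/40 := by
  set f : ℝ → ℝ := fun y => (y - y^3/6 + 3*y^5/40) - Real.arsinh y with hf
  have hder : ∀ x : ℝ, HasDerivAt f ((1 - x^2/2 + 3*x^4/8) - (Real.sqrt (1+x^2))⁻¹) x := by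
    intro x
    have h1 := Real.hasDerivAt_arsinh x
    have h2 : HasDerivAt (fun y : ℝ => y - y^3/6 + 3*y^5/40) (1 - x^2/2 + 3*x^4/8) x := by
      have h3 := ((hasDerivAt_pow 3 x).div_const 6)
      have h5 := (((hasDerivAt_pow 5 x).const_mul 3).div_const 40)
      have h4 := ((hasDerivAt_id' x).sub h3).add h5
      refine h4.congr_deriv ?_
      norm_num
      ring
    exact h2.sub h1
  have mono : MonotoneOn f (Set.Icc 0 1) := by
    apply monotoneOn_of_deriv_nonneg (convex_Icc 0 1)
    · exact ((by continuity : Continuous fun y:ℝ => y - y^3/6 + 3*y^5/40).sub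
        Real.continuous_arsinh).continuousOn
    · intro x hx
      exact ((hder x).differentiableAt).differentiableWithinAt
    · intro x hx
      rw [interior_Icc] at hx
      obtain ⟨hx0', hx1'⟩ := hx
      rw [(hder x).deriv]
      have hx0 : (0:ℝ) < 1 + x^2 := by positivity
      set s := Real.sqrt (1+x^2) with hs
      have hs2 : s^2 = 1 + x^2 := Real.sq_sqrt hx0.le
      have hs0 : 0 < s := Real.sqrt_pos.mpr hx0
      have hA : (0:ℝ) < 1 - x^2/2 + 3*x^4/8 := by nlinarith [sq_nonneg (x^2 - 1)]
      have hp2 : 1 ≤ ((1 - x^2/2 + 3*x^4/8) * s)^2 := by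
        rw [mul_pow, hs2]
        have h86 : x^8 ≤ x^6 := pow_le_pow_of_le_one hx0'.le hx1'.le (by norm_num)
        have h10 : (0:ℝ) ≤ x^10 := by positivity
        have h6 : (0:ℝ) ≤ x^6 := by positivity
        nlinarith [h86, h10, h6]
      have key : 1 ≤ (1 - x^2/2 + 3*x^4/8) * s := by
        nlinarith [mul_pos hA hs0]
      have hsinv : 0 < s⁻¹ := by positivity
      have : s⁻¹ ≤ 1 - x^2/2 + 3*x^4/8 := by
        calc s⁻¹ = 1 * s⁻¹ := (one_mul _).symm
          _ ≤ ((1 - x^2/2 + 3*x^4/8) * s) * s⁻¹ := mul_le_mul_of_nonneg_right key hsinv.le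
          _ = 1 - x^2/2 + 3*x^4/8 := by field_simp
      linarith
  have h0 : f 0 = 0 := by simp [hf]
  have := mono (Set.mem_Icc.mpr ⟨le_refl 0, zero_le_one⟩) (Set.mem_Icc.mpr ⟨ht, ht1⟩) ht
  rw [h0] at this
  simp only [hf] at this
  linarith

lemma core_sharp {t : ℝ} (ht : 0 < t) (ht1 : t < 1) :
    Real.arsinh t * ((1 - t^2) ^ (2/9 : ℝ) * (1 + t^2) ^ (7/18 : ℝ)) < t := by
  have hA : (0:ℝ) < 1 - t^2 := by nlinarith
  have hB : (0:ℝ) < 1 + t^2 := by positivity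
  have hu0 : 0 < Real.arsinh t := Real.arsinh_pos_iff.mpr ht
  set X := Real.arsinh t * ((1 - t^2) ^ (2/9 : ℝ) * (1 + t^2) ^ (7/18 : ℝ)) with hX
  have hX0 : 0 < X := by
    apply mul_pos hu0
    exact mul_pos (Real.rpow_pos_of_pos hA _) (Real.rpow_pos_of_pos hB _)
  by_contra hcon
  push_neg at hcon
  have h18 : t^18 ≤ X^18 := pow_le_pow_left₀ ht.le hcon 18
  have e1 : ((1 - t^2) ^ (2/9 : ℝ))^(18:ℕ) = (1-t^2)^(4:ℕ) := by
    rw [← Real.rpow_natCast ((1 - t^2) ^ (2/9 : ℝ)) 18, ← Real.rpow_mul hA.le,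
      show (2/9:ℝ)*(18:ℕ) = ((4:ℕ):ℝ) by norm_num, Real.rpow_natCast]
  have e2 : ((1 + t^2) ^ (7/18 : ℝ))^(18:ℕ) = (1+t^2)^(7:ℕ) := by
    rw [← Real.rpow_natCast ((1 + t^2) ^ (7/18 : ℝ)) 18, ← Real.rpow_mul hB.le,
      show (7/18:ℝ)*(18:ℕ) = ((7:ℕ):ℝ) by norm_num, Real.rpow_natCast]
  have hXpow : X^18 = (Real.arsinh t)^18 * ((1-t^2)^4 * (1+t^2)^7) := by
    rw [hX, mul_pow, mul_pow, e1, e2]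
  have hP : (Real.arsinh t)^18 ≤ (t * (1 - t^2/6 + 3*(t^2)^2/40))^18 := by
    apply pow_le_pow_left₀ hu0.le
    calc Real.arsinh t ≤ t - t^3/6 + 3*t^5/40 := arsinh_ub ht.le ht1.le
      _ = t * (1 - t^2/6 + 3*(t^2)^2/40) := by ring
  have hx0 : (0:ℝ) < t^2 := by positivity
  have hx1 : t^2 < 1 := by nlinarith
  have hD := polyD hx0 hx1
  have hfin : X^18 < t^18 := by
    have hAB : (0:ℝ) ≤ (1-t^2)^4 * (1+t^2)^7 := by positivity
    calc X^18 = (Real.arsinh t)^18 * ((1-t^2)^4 * (1+t^2)^7) := hXpow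
      _ ≤ (t * (1 - t^2/6 + 3*(t^2)^2/40))^18 * ((1-t^2)^4 * (1+t^2)^7) :=
          mul_le_mul_of_nonneg_right hP hAB
      _ = t^18 * ((1 - t^2/6 + 3*(t^2)^2/40)^18 * (1-t^2)^4 * (1+t^2)^7) := by
          rw [mul_pow]; ring
      _ < t^18 * 1 := by
          apply mul_lt_mul_of_pos_left _ (by positivity : (0:ℝ) < t^18)
          exact hD
      _ = t^18 := mul_one _
  linarith

lemma core {α t : ℝ} (hα : 2/9 ≤ α) (ht : 0 < t) (ht1 : t < 1) :
    Real.arsinh t * ((1 - t^2) ^ α * (1 + t^2) ^ ((1-α)/2)) < t := by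
  have hA : (0:ℝ) < 1 - t^2 := by nlinarith
  have hB : (0:ℝ) < 1 + t^2 := by positivity
  have hB1 : (1:ℝ) ≤ 1 + t^2 := by nlinarith
  have hu0 : 0 < Real.arsinh t := Real.arsinh_pos_iff.mpr ht
  have rep : ∀ β : ℝ, (1 - t^2) ^ β * (1 + t^2) ^ ((1-β)/2)
      = ((1 - t^2) * (1 + t^2) ^ (-(1/2) : ℝ)) ^ β * (1 + t^2) ^ ((1/2) : ℝ) := by
    intro β
    rw [Real.mul_rpow hA.le (Real.rpow_nonneg hB.le _), mul_assoc,
      ← Real.rpow_mul hB.le, ← Real.rpow_add hB]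
    congr 1
    · ring
  have hr0 : 0 < (1 - t^2) * (1 + t^2) ^ (-(1/2) : ℝ) :=
    mul_pos hA (Real.rpow_pos_of_pos hB _)
  have hr1 : (1 - t^2) * (1 + t^2) ^ (-(1/2) : ℝ) ≤ 1 := by
    have h1 : (1 - t^2 : ℝ) ≤ 1 := by nlinarith
    have h2 : (1 + t^2 : ℝ) ^ (-(1/2) : ℝ) ≤ 1 :=
      Real.rpow_le_one_of_one_le_of_nonpos hB1 (by norm_num)
    have h3 : (0:ℝ) ≤ (1 + t^2 : ℝ) ^ (-(1/2) : ℝ) := (Real.rpow_pos_of_pos hB _).le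
    nlinarith
  have mono : ((1 - t^2) * (1 + t^2) ^ (-(1/2) : ℝ)) ^ α
      ≤ ((1 - t^2) * (1 + t^2) ^ (-(1/2) : ℝ)) ^ (2/9 : ℝ) :=
    Real.rpow_le_rpow_of_exponent_ge hr0 hr1 hα
  have step : (1 - t^2) ^ α * (1 + t^2) ^ ((1-α)/2)
      ≤ (1 - t^2) ^ (2/9:ℝ) * (1 + t^2) ^ (7/18:ℝ) := by
    rw [rep α, show (7/18:ℝ) = (1 - 2/9)/2 by norm_num, rep (2/9)]
    exact mul_le_mul_of_nonneg_right mono (Real.rpow_pos_of_pos hB _).le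
  calc Real.arsinh t * ((1 - t^2) ^ α * (1 + t^2) ^ ((1-α)/2))
      ≤ Real.arsinh t * ((1 - t^2) ^ (2/9:ℝ) * (1 + t^2) ^ (7/18:ℝ)) :=
        mul_le_mul_of_nonneg_left step hu0.le
    _ < t := core_sharp ht ht1

lemma reduce {α a b : ℝ} (hb : 0 < b) (hab : b < a) :
    (H a b ^ α * Q a b ^ (1-α) < M a b ↔
      Real.arsinh ((a-b)/(a+b)) *
        ((1 - ((a-b)/(a+b))^2) ^ α * (1 + ((a-b)/(a+b))^2) ^ ((1-α)/2)) < (a-b)/(a+b)) := by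
  have ha : 0 < a := hb.trans hab
  have hsum : 0 < a + b := by linarith
  set t := (a - b)/(a + b) with htdef
  have ht0 : 0 < t := div_pos (by linarith) hsum
  have ht1 : t < 1 := by rw [htdef, div_lt_one hsum]; linarith
  have hA : (0:ℝ) < 1 - t^2 := by nlinarith
  have hB : (0:ℝ) < 1 + t^2 := by positivity
  have hu0 : 0 < Real.arsinh t := Real.arsinh_pos_iff.mpr ht0
  set P := (a+b)/2 with hPdef
  have hP0 : 0 < P := by positivity
  have hH : H a b = P * (1 - t^2) := by
    rw [H, hPdef, htdef]; field_simp; ring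
  have hQ : Q a b = P * Real.sqrt (1 + t^2) := by
    rw [Q, show (a^2+b^2)/2 = P^2 * (1 + t^2) by rw [hPdef, htdef]; field_simp; ring,
      Real.sqrt_mul (by positivity) , Real.sqrt_sq hP0.le]
  have hM : M a b = P * (t / Real.arsinh t) := by
    rw [M, ← htdef, show a - b = 2 * P * t by rw [hPdef, htdef]; field_simp]
    field_simp [hu0.ne']
  have hHQ : H a b ^ α * Q a b ^ (1-α) = P * ((1 - t^2) ^ α * (1 + t^2) ^ ((1-α)/2)) := by
    rw [hH, hQ, Real.mul_rpow hP0.le hA.le, Real.mul_rpow hP0.le (Real.sqrt_nonneg _),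
      Real.sqrt_eq_rpow, ← Real.rpow_mul hB.le]
    rw [show (1/2) * (1-α) = (1-α)/2 by ring]
    calc P ^ α * (1 - t^2) ^ α * (P ^ (1-α) * (1 + t^2) ^ ((1-α)/2))
        = (P ^ α * P ^ (1-α)) * ((1 - t^2) ^ α * (1 + t^2) ^ ((1-α)/2)) := by ring
      _ = P * ((1 - t^2) ^ α * (1 + t^2) ^ ((1-α)/2)) := by
          rw [← Real.rpow_add hP0, show α + (1-α) = (1:ℝ) by ring, Real.rpow_one]
  rw [hHQ, hM, mul_lt_mul_iff_right₀ hP0, lt_div_iff₀ hu0, mul_comm]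

lemma rpow_lb {w : ℝ} (hw : 0 < w) (γ : ℝ) : 1 + Real.log w * γ ≤ w ^ γ := by
  rw [Real.rpow_def_of_pos hw]
  linarith [Real.add_one_le_exp (Real.log w * γ)]


lemma fwd_nonpos {α : ℝ} (hα : α ≤ 0) :
    (1/2 : ℝ) ≤ Real.arsinh (1/2) *
      ((1 - (1/2:ℝ)^2) ^ α * (1 + (1/2:ℝ)^2) ^ ((1-α)/2)) := by
  have hu : (23/48 : ℝ) ≤ Real.arsinh (1/2) := by
    have := arsinh_lb (t := 1/2) (by norm_num)
    norm_num at this ⊢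
    linarith
  have h1 : (1:ℝ) ≤ (1 - (1/2:ℝ)^2) ^ α :=
    Real.one_le_rpow_of_pos_of_le_one_of_nonpos (by norm_num) (by norm_num) hα
  have h2 : ((1 + (1/2:ℝ)^2) : ℝ) ^ ((1/2):ℝ) ≤ (1 + (1/2:ℝ)^2) ^ ((1-α)/2) :=
    Real.rpow_le_rpow_of_exponent_le (by norm_num) (by linarith)
  have h3 : (11/10 : ℝ) ≤ (1 + (1/2:ℝ)^2) ^ ((1/2):ℝ) := by
    rw [show ((1/2):ℝ) = 1/(2:ℝ) by norm_num, ← Real.sqrt_eq_rpow]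
    rw [show ((1:ℝ) + (1/2:ℝ)^2) = 5/4 by norm_num]
    rw [Real.le_sqrt (by norm_num) (by norm_num)]
    norm_num
  have h4 : (11/10 : ℝ) ≤ (1 + (1/2:ℝ)^2) ^ ((1-α)/2) := le_trans h3 h2
  have hp : (0:ℝ) ≤ (1 - (1/2:ℝ)^2) ^ α := by positivity
  have h5 : (11/10 : ℝ) ≤ (1 - (1/2:ℝ)^2) ^ α * (1 + (1/2:ℝ)^2) ^ ((1-α)/2) := by
    calc (11/10 : ℝ) = 1 * (11/10) := by norm_num
      _ ≤ (1 - (1/2:ℝ)^2) ^ α * (1 + (1/2:ℝ)^2) ^ ((1-α)/2) :=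
          mul_le_mul h1 h4 (by norm_num) (by linarith)
  calc (1/2 : ℝ) ≤ (23/48) * (11/10) := by norm_num
    _ ≤ Real.arsinh (1/2) * ((1 - (1/2:ℝ)^2) ^ α * (1 + (1/2:ℝ)^2) ^ ((1-α)/2)) :=
        mul_le_mul hu h5 (by norm_num) (by linarith)

lemma fwd_pos {α t : ℝ} (hα0 : 0 < α) (hα2 : α < 2/9) (ht : t = Real.sqrt (1/6 - 3*α/4)) :
    t ≤ Real.arsinh t * ((1 - t^2) ^ α * (1 + t^2) ^ ((1-α)/2)) := by
  obtain ⟨x, hxdef⟩ : ∃ x : ℝ, x = 1/6 - 3*α/4 := ⟨_, rfl⟩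
  rw [← hxdef] at ht
  have hx0 : 0 < x := by rw [hxdef]; linarith
  have hx6 : x ≤ 1/6 := by rw [hxdef]; linarith
  have ht2 : t^2 = x := by rw [ht]; exact Real.sq_sqrt hx0.le
  have ht0 : 0 < t := by rw [ht]; exact Real.sqrt_pos.mpr hx0
  have h1x : (0:ℝ) < 1 - x := by linarith
  have h1x' : (0:ℝ) < 1 + x := by linarith
  have hu : t * (1 - x/6) ≤ Real.arsinh t := by
    have h := arsinh_lb ht0.le
    have e : t - t^3/6 = t * (1 - x/6) := by
      rw [show t^3 = t * t^2 by ring, ht2]; ring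
    linarith [e ▸ h]
  have hu0 : 0 < Real.arsinh t := Real.arsinh_pos_iff.mpr ht0
  have hLA : 1 - α*x/(1-x) ≤ (1 - x) ^ α := by
    have hlog : 1 - (1-x)⁻¹ ≤ Real.log (1-x) := Real.one_sub_inv_le_log_of_pos h1x
    have h' : (1 - (1-x)⁻¹) * α ≤ Real.log (1-x) * α :=
      mul_le_mul_of_nonneg_right hlog hα0.le
    have e : (1 - (1-x)⁻¹) * α = -(α*x/(1-x)) := by
      field_simp
      ring_nf
    calc 1 - α*x/(1-x) = 1 + (1 - (1-x)⁻¹) * α := by rw [e]; ring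
      _ ≤ 1 + Real.log (1-x) * α := by linarith
      _ ≤ (1 - x) ^ α := rpow_lb h1x α
  have hβ0 : (0:ℝ) ≤ (1-α)/2 := by linarith
  have hLB : 1 + ((1-α)/2)*x/(1+x) ≤ (1 + x) ^ ((1-α)/2) := by
    have hlog : 1 - (1+x)⁻¹ ≤ Real.log (1+x) := Real.one_sub_inv_le_log_of_pos h1x'
    have h' : (1 - (1+x)⁻¹) * ((1-α)/2) ≤ Real.log (1+x) * ((1-α)/2) :=
      mul_le_mul_of_nonneg_right hlog hβ0
    have e : (1 - (1+x)⁻¹) * ((1-α)/2) = ((1-α)/2)*x/(1+x) := by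
      field_simp
      ring
    calc 1 + ((1-α)/2)*x/(1+x) = 1 + (1 - (1+x)⁻¹) * ((1-α)/2) := by rw [e]
      _ ≤ 1 + Real.log (1+x) * ((1-α)/2) := by linarith
      _ ≤ (1 + x) ^ ((1-α)/2) := rpow_lb h1x' _
  have key : (1 - x/6)*((1-x) - α*x)*((1+x) + ((1-α)/2)*x) - (1-x)*(1+x)
      = (α - 2/9)^2 * (105/128 - 131*α/256 + 13*α^2/64 + 9*α^3/256) := by
    rw [hxdef]; ring
  have hq2 : (0:ℝ) ≤ 105/128 - 131*α/256 + 13*α^2/64 + 9*α^3/256 := by nlinarith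
  have hkey : (1-x)*(1+x) ≤ (1 - x/6)*((1-x) - α*x)*((1+x) + ((1-α)/2)*x) := by
    nlinarith [mul_nonneg (sq_nonneg (α - 2/9)) hq2, key]
  have hG : 1 ≤ (1 - x/6) * ((1 - α*x/(1-x)) * (1 + ((1-α)/2)*x/(1+x))) := by
    rw [← sub_nonneg]
    have e : (1 - x/6) * ((1 - α*x/(1-x)) * (1 + ((1-α)/2)*x/(1+x))) - 1
        = ((1 - x/6)*((1-x) - α*x)*((1+x) + ((1-α)/2)*x) - (1-x)*(1+x)) / ((1-x)*(1+x)) := by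
      field_simp
    rw [e]
    apply div_nonneg (by linarith) (by positivity)
  have hx16 : (0:ℝ) < 1 - x/6 := by linarith
  have hLALB : (0:ℝ) ≤ (1 - α*x/(1-x)) * (1 + ((1-α)/2)*x/(1+x)) := by
    nlinarith [hG, hx16]
  have hBpos : (0:ℝ) ≤ (1 - x) ^ α := (Real.rpow_pos_of_pos h1x α).le
  have step1 : (1 - α*x/(1-x)) * (1 + ((1-α)/2)*x/(1+x)) ≤ (1 - x) ^ α * (1 + x) ^ ((1-α)/2) := by
    apply mul_le_mul hLA hLB _ hBpos
    have h5 : (0:ℝ) < 1 + ((1-α)/2)*x/(1+x) := by positivity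
    linarith
  have step2 : (t * (1 - x/6)) * ((1 - α*x/(1-x)) * (1 + ((1-α)/2)*x/(1+x)))
      ≤ Real.arsinh t * ((1 - x) ^ α * (1 + x) ^ ((1-α)/2)) :=
    mul_le_mul hu step1 hLALB hu0.le
  have step0 : t ≤ (t * (1 - x/6)) * ((1 - α*x/(1-x)) * (1 + ((1-α)/2)*x/(1+x))) := by
    calc t = t * 1 := (mul_one t).symm
      _ ≤ t * ((1 - x/6) * ((1 - α*x/(1-x)) * (1 + ((1-α)/2)*x/(1+x)))) :=
          mul_le_mul_of_nonneg_left hG ht0.le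
      _ = (t * (1 - x/6)) * ((1 - α*x/(1-x)) * (1 + ((1-α)/2)*x/(1+x))) := by ring
  rw [ht2]
  linarith

lemma Hsymm (a b : ℝ) : H a b = H b a := by rw [H, H]; ring_nf

lemma Qsymm (a b : ℝ) : Q a b = Q b a := by rw [Q, Q]; ring_nf

lemma Msymm (a b : ℝ) : M a b = M b a := by
  have e : (b-a)/(b+a) = -((a-b)/(a+b)) := by
    rw [show b+a = a+b from add_comm b a, show b-a = -(a-b) by ring, neg_div]
  rw [M, M, e, Real.arsinh_neg, show b - a = -(a - b) by ring, mul_neg, neg_div_neg_eq]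

lemma main_lt {α a b : ℝ} (hα : 2/9 ≤ α) (hb : 0 < b) (hab : b < a) :
    H a b ^ α * Q a b ^ (1-α) < M a b := by
  have hsum : 0 < a + b := by linarith
  rw [reduce hb hab]
  exact core hα (div_pos (by linarith) hsum) (by rw [div_lt_one hsum]; linarith)

theorem stmt0 (α : ℝ) :
    (∀ a b : ℝ, 0 < a → 0 < b → a ≠ b →
      H a b ^ α * Q a b ^ (1 - α) < M a b) ↔ 2 / 9 ≤ α := by
  constructor
  · intro h
    by_contra hc
    push_neg at hc
    rcases le_or_gt α 0 with hα | hα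
    · have h1 := h (3/2) (1/2) (by norm_num) (by norm_num) (by norm_num)
      rw [reduce (by norm_num) (by norm_num)] at h1
      rw [show ((3/2:ℝ)-1/2)/((3/2:ℝ)+1/2) = 1/2 by norm_num] at h1
      exact absurd h1 (not_lt.mpr (fwd_nonpos hα))
    · have hx0 : (0:ℝ) < 1/6 - 3*α/4 := by linarith
      set t := Real.sqrt (1/6 - 3*α/4) with htdef
      have ht0 : 0 < t := Real.sqrt_pos.mpr hx0
      have ht2 : t^2 = 1/6 - 3*α/4 := Real.sq_sqrt hx0.le
      have ht1 : t < 1 := by nlinarith [ht2, ht0]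
      have h1 := h (1+t) (1-t) (by linarith) (by linarith)
        (by intro hh; apply ht0.ne'; linarith)
      rw [reduce (by linarith) (by linarith)] at h1
      rw [show ((1+t)-(1-t))/((1+t)+(1-t)) = t by field_simp; ring] at h1
      exact absurd h1 (not_lt.mpr (fwd_pos hα hc htdef))
  · intro hα a b ha hb hab
    rcases lt_or_gt_of_ne hab with hlt | hgt
    · rw [Hsymm, Qsymm, Msymm]
      exact main_lt hα ha hlt
    · exact main_lt hα hb hgt
end

section
/- For all a, b > 0 with a ≠ b, M(a,b) < H(a,b)^β · Q(a,b)^(1-β) holds for all such a, b if and only if β ≤ 0; in particular M(a,b) < Q(a,b). -/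
lemma sinh_lt_mul_cosh {u : ℝ} (hu : 0 < u) : Real.sinh u < u * Real.cosh u := by
  have key : StrictMonoOn (fun x => x * Real.cosh x - Real.sinh x) (Set.Ici 0) := by
    apply strictMonoOn_of_deriv_pos (convex_Ici 0)
    · fun_prop
    · intro x hx
      rw [interior_Ici] at hx
      have h1 : HasDerivAt (fun x => x * Real.cosh x - Real.sinh x) (x * Real.sinh x) x := by
        have := ((hasDerivAt_id x).mul (Real.hasDerivAt_cosh x)).sub (Real.hasDerivAt_sinh x)
        refine this.congr_deriv ?_
        simp only [id_eq]
        ring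
      rw [h1.deriv]
      exact mul_pos hx (Real.sinh_pos_iff.mpr hx)
  have := key Set.self_mem_Ici (Set.mem_Ici.mpr hu.le) hu
  simpa using this

lemma lt_sqrt_mul_arsinh {t : ℝ} (ht : 0 < t) :
    t < Real.sqrt (1 + t ^ 2) * Real.arsinh t := by
  have hu : 0 < Real.arsinh t := Real.arsinh_pos_iff.mpr ht
  have := sinh_lt_mul_cosh hu
  rw [Real.sinh_arsinh, Real.cosh_arsinh] at this
  linarith [this, mul_comm (Real.arsinh t) (Real.sqrt (1 + t ^ 2))]

lemma M_symm (a b : ℝ) : M b a = M a b := by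
  unfold M
  rw [show b - a = -(a - b) by ring, show b + a = a + b by ring, neg_div, neg_div,
    Real.arsinh_neg, mul_neg, div_neg, neg_neg]

lemma Q_symm (a b : ℝ) : Q b a = Q a b := by
  unfold Q
  congr 1
  ring

lemma M_lt_Q' {a b : ℝ} (ha : 0 < a) (hb : 0 < b) (hba : b < a) : M a b < Q a b := by
  have hs : 0 < a + b := by linarith
  set t : ℝ := (a - b) / (a + b) with htdef
  have ht : 0 < t := div_pos (by linarith) hs
  have hs' : a + b ≠ 0 := ne_of_gt hs
  have hab : a - b = (a + b) * t := by rw [htdef]; field_simp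
  have hQ : Q a b = (a + b) / 2 * Real.sqrt (1 + t ^ 2) := by
    unfold Q
    rw [show (a ^ 2 + b ^ 2) / 2 = ((a + b) / 2) ^ 2 * (1 + t ^ 2) by
      linear_combination (a - b + (a + b) * t) / 4 * hab]
    rw [Real.sqrt_mul (sq_nonneg _), Real.sqrt_sq (by positivity)]
  have hM : M a b = (a + b) * t / (2 * Real.arsinh t) := by
    unfold M
    rw [← hab]
  have hu : 0 < Real.arsinh t := Real.arsinh_pos_iff.mpr ht
  rw [hM, hQ, div_lt_iff₀ (by positivity)]
  have key := lt_sqrt_mul_arsinh ht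
  nlinarith [key, hs, Real.sqrt_nonneg (1 + t ^ 2)]

lemma M_lt_Q {a b : ℝ} (ha : 0 < a) (hb : 0 < b) (hab : a ≠ b) : M a b < Q a b := by
  rcases lt_or_gt_of_ne hab with h | h
  · rw [← M_symm, ← Q_symm]; exact M_lt_Q' hb ha h
  · exact M_lt_Q' ha hb h

lemma H_pos {a b : ℝ} (ha : 0 < a) (hb : 0 < b) : 0 < H a b := by
  unfold H; positivity

lemma H_le_Q {a b : ℝ} (ha : 0 < a) (hb : 0 < b) : H a b ≤ Q a b := by
  have h1 : H a b ≤ (a + b) / 2 := by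
    unfold H
    rw [div_le_div_iff₀ (by linarith) (by norm_num)]
    nlinarith [sq_nonneg (a - b)]
  have h2 : (a + b) / 2 ≤ Q a b := by
    unfold Q
    rw [show ((a+b)/2 : ℝ) = Real.sqrt (((a+b)/2)^2) from (Real.sqrt_sq (by positivity)).symm]
    apply Real.sqrt_le_sqrt
    nlinarith [sq_nonneg (a - b)]
  linarith

theorem stmt1 :
    (∀ β : ℝ, (∀ a b : ℝ, 0 < a → 0 < b → a ≠ b →
      M a b < H a b ^ β * Q a b ^ (1 - β)) ↔ β ≤ 0) ∧
    (∀ a b : ℝ, 0 < a → 0 < b → a ≠ b → M a b < Q a b) := by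
  constructor
  · intro β
    constructor
    · -- if the inequality holds for all a b, then β ≤ 0
      intro hall
      by_contra hβ
      push_neg at hβ
      set b : ℝ := min (1/2) (8⁻¹ * (4:ℝ) ^ (-β⁻¹)) with hbdef
      have hb4 : (0:ℝ) < (4:ℝ) ^ (-β⁻¹) := Real.rpow_pos_of_pos (by norm_num) _
      have hb0 : 0 < b := lt_min (by norm_num) (by positivity)
      have hbhalf : b ≤ 1/2 := min_le_left _ _
      have hbne : (1:ℝ) ≠ b := by
        intro h; rw [← h] at hbhalf; norm_num at hbhalf
      have h := hall 1 b one_pos hb0 hbne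
      -- lower bound M 1 b ≥ 1/4
      set t : ℝ := (1 - b) / (1 + b) with htdef
      have ht0 : 0 < t := by
        apply div_pos <;> linarith
      have ht1 : t ≤ 1 := by
        rw [div_le_one (by linarith)]; linarith
      have harsinh_pos : 0 < Real.arsinh t := Real.arsinh_pos_iff.mpr ht0
      have harsinh_le : Real.arsinh t ≤ 1 := by
        have h1 : t ≤ Real.sinh t := (Real.self_lt_sinh_iff.mpr ht0).le
        have h2 : Real.arsinh t ≤ Real.arsinh (Real.sinh t) :=
          Real.arsinh_le_arsinh.mpr h1
        rw [Real.arsinh_sinh] at h2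
        linarith
      have hM : (1:ℝ)/4 ≤ M 1 b := by
        unfold M
        rw [le_div_iff₀ (by positivity)]
        nlinarith
      -- upper bound on the right side
      have hH : H 1 b ≤ 4 * b := by
        unfold H
        rw [div_le_iff₀ (by linarith)]
        nlinarith
      have hHb : H 1 b ^ β ≤ (4 * b) ^ β :=
        Real.rpow_le_rpow (H_pos one_pos hb0).le hH hβ.le
      have hQ1 : Q 1 b ≤ 1 := by
        unfold Q
        rw [Real.sqrt_le_one]
        nlinarith
      have hQhalf : (1:ℝ)/2 ≤ Q 1 b := by
        unfold Q
        rw [Real.le_sqrt (by norm_num) (by positivity)]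
        nlinarith
      have hQpos : 0 < Q 1 b := by linarith
      have hQb : Q 1 b ^ (1 - β) ≤ (2:ℝ) ^ β := by
        rcases le_or_gt 0 (1 - β) with hc | hc
        · calc Q 1 b ^ (1 - β) ≤ 1 := Real.rpow_le_one hQpos.le hQ1 hc
            _ ≤ (2:ℝ) ^ β := Real.one_le_rpow (by norm_num) hβ.le
        · calc Q 1 b ^ (1 - β) ≤ ((1:ℝ)/2) ^ (1 - β) :=
              Real.rpow_le_rpow_of_nonpos (by norm_num) hQhalf hc.le
            _ = (2:ℝ) ^ (β - 1) := by
              rw [show ((1:ℝ)/2) = 2⁻¹ by norm_num, ← Real.rpow_neg_one (2:ℝ),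
                ← Real.rpow_mul (by norm_num)]
              ring_nf
            _ ≤ (2:ℝ) ^ β := Real.rpow_le_rpow_of_exponent_le (by norm_num) (by linarith)
      have hRHS : H 1 b ^ β * Q 1 b ^ (1 - β) ≤ (8 * b) ^ β := by
        calc H 1 b ^ β * Q 1 b ^ (1 - β) ≤ (4 * b) ^ β * (2:ℝ) ^ β := by
              apply mul_le_mul hHb hQb (Real.rpow_nonneg hQpos.le _)
                (Real.rpow_nonneg (by positivity) _)
          _ = (8 * b) ^ β := by
              rw [← Real.mul_rpow (by positivity) (by norm_num)]
              ring_nf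
      have h8b : 8 * b ≤ (4:ℝ) ^ (-β⁻¹) := by
        have : b ≤ 8⁻¹ * (4:ℝ) ^ (-β⁻¹) := min_le_right _ _
        linarith
      have hfinal : ((8:ℝ) * b) ^ β ≤ 1/4 := by
        calc (8 * b) ^ β ≤ ((4:ℝ) ^ (-β⁻¹)) ^ β :=
            Real.rpow_le_rpow (by positivity) h8b hβ.le
          _ = (4:ℝ) ^ (-β⁻¹ * β) := (Real.rpow_mul (by norm_num) _ _).symm
          _ = 1/4 := by
              rw [show -β⁻¹ * β = -1 by field_simp]
              rw [Real.rpow_neg_one]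
              norm_num
      linarith
    · -- β ≤ 0 implies the inequality
      intro hβ a b ha hb hab
      have hQpos : 0 < Q a b := by unfold Q; positivity
      have hHpos : 0 < H a b := H_pos ha hb
      have hHQ : H a b ≤ Q a b := H_le_Q ha hb
      have h1 : 1 ≤ (H a b / Q a b) ^ β :=
        Real.one_le_rpow_of_pos_of_le_one_of_nonpos (div_pos hHpos hQpos)
          (div_le_one_of_le₀ hHQ hQpos.le) hβ
      have h2 : Q a b ≤ H a b ^ β * Q a b ^ (1 - β) := by
        have hrw : H a b ^ β * Q a b ^ (1 - β) = (H a b / Q a b) ^ β * Q a b := by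
          rw [Real.div_rpow hHpos.le hQpos.le, Real.rpow_sub hQpos, Real.rpow_one]
          have hq : Q a b ^ β ≠ 0 := ne_of_gt (Real.rpow_pos_of_pos hQpos _)
          field_simp
        rw [hrw]
        nlinarith
      exact lt_of_lt_of_le (M_lt_Q ha hb hab) h2
  · intro a b ha hb hab
    exact M_lt_Q ha hb hab
end

section
/- The function φ(t) = [3 - cosh(2t)]·[sinh(2t) - 2t] / (2t·sinh²(t)·[5 + cosh(2t)]) is strictly decreasing on the interval (0, log(1+√2)). -/
open Real Set

private lemma nonneg_of_hasDerivAt {F F' : ℝ → ℝ} (hd : ∀ x : ℝ, HasDerivAt F (F' x) x)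
    (h0 : F 0 = 0) (hF' : ∀ x : ℝ, 0 < x → 0 ≤ F' x) {t : ℝ} (ht : 0 ≤ t) : 0 ≤ F t := by
  have mono : MonotoneOn F (Set.Ici 0) :=
    monotoneOn_of_deriv_nonneg (convex_Ici 0)
      (fun x _ => (hd x).continuousAt.continuousWithinAt)
      (fun x _ => (hd x).differentiableAt.differentiableWithinAt)
      (fun x hx => by
        rw [(hd x).deriv]
        exact hF' x (by simpa [interior_Ici] using hx))
  have := mono Set.self_mem_Ici (Set.mem_Ici.mpr ht) ht
  rwa [h0] at this

private lemma aux1 {t : ℝ} (ht : 0 ≤ t) : Real.sinh t ≤ t * Real.cosh t := by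
  have h : 0 ≤ t * Real.cosh t - Real.sinh t := by
    refine nonneg_of_hasDerivAt (F := fun y => y * Real.cosh y - Real.sinh y) (F' := fun y => y * Real.sinh y) (fun x => ?_) (by simp)
      (fun x hx => by positivity) ht
    have := ((hasDerivAt_id x).mul (Real.hasDerivAt_cosh x)).sub (Real.hasDerivAt_sinh x)
    exact this.congr_deriv (by simp only [id_eq]; ring)
  linarith

private lemma aux2 {t : ℝ} (ht : 0 ≤ t) : t ≤ Real.sinh t * Real.cosh t := by
  have h : 0 ≤ Real.sinh t * Real.cosh t - t := by
    refine nonneg_of_hasDerivAt (F := fun y => Real.sinh y * Real.cosh y - y)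
      (F' := fun y => Real.cosh y * Real.cosh y + Real.sinh y * Real.sinh y - 1)
      (fun x => ?_) (by simp) (fun x hx => by
        show 0 ≤ Real.cosh x * Real.cosh x + Real.sinh x * Real.sinh x - 1
        nlinarith [Real.one_le_cosh x, sq_nonneg (Real.sinh x)]) ht
    have := ((Real.hasDerivAt_sinh x).mul (Real.hasDerivAt_cosh x)).sub (hasDerivAt_id x)
    exact this.congr_deriv (by simp only [id_eq])
  linarith

private lemma aux3 {t : ℝ} (ht : 0 ≤ t) : 0 ≤ 2 - 2 * Real.cosh t + t * Real.sinh t := by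
  refine nonneg_of_hasDerivAt (F := fun y => 2 - 2 * Real.cosh y + y * Real.sinh y) (F' := fun y => y * Real.cosh y - Real.sinh y) (fun x => ?_)
    (by simp) (fun x hx => by
      show 0 ≤ x * Real.cosh x - Real.sinh x
      linarith [aux1 hx.le]) ht
  have := ((hasDerivAt_const x (2:ℝ)).sub ((Real.hasDerivAt_cosh x).const_mul 2)).add
    ((hasDerivAt_id x).mul (Real.hasDerivAt_sinh x))
  exact this.congr_deriv (by simp only [id_eq]; ring)

private lemma aux4 {t : ℝ} (ht : 0 ≤ t) : 3 * Real.sinh t ≤ t * (2 + Real.cosh t) := by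
  have h : 0 ≤ t * (2 + Real.cosh t) - 3 * Real.sinh t := by
    refine nonneg_of_hasDerivAt (F := fun y => y * (2 + Real.cosh y) - 3 * Real.sinh y) (F' := fun y => 2 - 2 * Real.cosh y + y * Real.sinh y)
      (fun x => ?_) (by simp) (fun x hx => aux3 hx.le) ht
    have := ((hasDerivAt_id x).mul ((hasDerivAt_const x (2:ℝ)).add (Real.hasDerivAt_cosh x))).sub
      ((Real.hasDerivAt_sinh x).const_mul 3)
    exact this.congr_deriv (by simp only [id_eq, Pi.add_apply]; ring)
  linarith

private lemma aux5 {t : ℝ} (ht : 0 ≤ t) :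
    3 * (t * Real.cosh t) ≤ Real.sinh t * (3 + Real.sinh t ^ 2) := by
  have h : 0 ≤ Real.sinh t * (3 + Real.sinh t ^ 2) - 3 * (t * Real.cosh t) := by
    refine nonneg_of_hasDerivAt
      (F := fun y => Real.sinh y * (3 + Real.sinh y ^ 2) - 3 * (y * Real.cosh y))
      (F' := fun y => 3 * Real.sinh y * (Real.sinh y * Real.cosh y - y))
      (fun x => ?_) (by simp) (fun x hx => ?_) ht
    · have := ((Real.hasDerivAt_sinh x).mul ((hasDerivAt_const x (3:ℝ)).add
        ((Real.hasDerivAt_sinh x).pow 2))).sub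
        (((hasDerivAt_id x).mul (Real.hasDerivAt_cosh x)).const_mul 3)
      exact this.congr_deriv (by simp only [id_eq, Pi.add_apply, Pi.pow_apply]; push_cast; ring)
    · have h1 : 0 ≤ Real.sinh x := Real.sinh_nonneg_iff.mpr hx.le
      have h2 := aux2 hx.le
      show 0 ≤ 3 * Real.sinh x * (Real.sinh x * Real.cosh x - x)
      nlinarith
  linarith

private lemma keyB {t s c : ℝ} (ht : 0 < t) (hs : 0 < s) (hs1 : s < 1)
    (hc : c ^ 2 = 1 + s ^ 2) (hc1 : 1 ≤ c)
    (hl : 3 * s ≤ t * (2 + c)) (hu : 3 * (t * c) ≤ s * (3 + s ^ 2)) :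
    2 * c * (3 + 2 * s ^ 2 - s ^ 4) * t ^ 2 - s * (3 + 6 * s ^ 2 + 7 * s ^ 4) * t
      - s ^ 2 * c * (3 - 2 * s ^ 2 - s ^ 4) < 0 := by
  have hc0 : (0:ℝ) < c := lt_of_lt_of_le one_pos hc1
  -- squared upper bound on t
  have htc : 0 ≤ 3 * (t * c) := by positivity
  have ha := mul_self_le_mul_self htc hu
  have hx1 : 9 * (1 + s ^ 2) * t ^ 2 ≤ s ^ 2 * (3 + s ^ 2) ^ 2 := by nlinarith [ha]
  -- key scalar inequality 2K < cR
  have hR : (0:ℝ) < 54 + 99 * s ^ 2 + 150 * s ^ 4 - s ^ 6 + 2 * s ^ 8 := by nlinarith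
  have hsq : (2 * (27 + 63 * s ^ 2 + 39 * s ^ 4 + s ^ 6 - 2 * s ^ 8)) ^ 2
      < (c * (54 + 99 * s ^ 2 + 150 * s ^ 4 - s ^ 6 + 2 * s ^ 8)) ^ 2 := by
    have hcc : (c * (54 + 99 * s ^ 2 + 150 * s ^ 4 - s ^ 6 + 2 * s ^ 8)) ^ 2
        = (1 + s ^ 2) * (54 + 99 * s ^ 2 + 150 * s ^ 4 - s ^ 6 + 2 * s ^ 8) ^ 2 := by
      rw [mul_pow, hc]
    rw [hcc]
    nlinarith [pow_pos hs 4, pow_pos hs 6, pow_pos hs 8, sq_nonneg s,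
      mul_pos (pow_pos hs 14) (sub_pos.mpr hs1), pow_pos hs 16]
  have hQ : 2 * (27 + 63 * s ^ 2 + 39 * s ^ 4 + s ^ 6 - 2 * s ^ 8)
      < c * (54 + 99 * s ^ 2 + 150 * s ^ 4 - s ^ 6 + 2 * s ^ 8) :=
    lt_of_pow_lt_pow_left₀ 2 (by positivity) hsq
  -- multiply the target by the positive quantity 9*(1+s^2)*(2+c)
  have hpos : (0:ℝ) < 9 * (1 + s ^ 2) * (2 + c) := by positivity
  have hmain : 9 * (1 + s ^ 2) * (2 + c) *
      (2 * c * (3 + 2 * s ^ 2 - s ^ 4) * t ^ 2 - s * (3 + 6 * s ^ 2 + 7 * s ^ 4) * t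
        - s ^ 2 * c * (3 - 2 * s ^ 2 - s ^ 4)) < 0 := by
    have e1 : (2 + c) * (2 * c * (3 + 2 * s ^ 2 - s ^ 4)) * (9 * (1 + s ^ 2) * t ^ 2)
        ≤ (2 + c) * (2 * c * (3 + 2 * s ^ 2 - s ^ 4)) * (s ^ 2 * (3 + s ^ 2) ^ 2) := by
      apply mul_le_mul_of_nonneg_left hx1
      have : (0:ℝ) < 3 + 2 * s ^ 2 - s ^ 4 := by nlinarith
      positivity
    have e2 : (9 * (1 + s ^ 2) * (s * (3 + 6 * s ^ 2 + 7 * s ^ 4))) * (3 * s)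
        ≤ (9 * (1 + s ^ 2) * (s * (3 + 6 * s ^ 2 + 7 * s ^ 4))) * (t * (2 + c)) := by
      apply mul_le_mul_of_nonneg_left hl
      positivity
    have e3 : s ^ 2 * (c * (2 * (27 + 63 * s ^ 2 + 39 * s ^ 4 + s ^ 6 - 2 * s ^ 8)))
        < s ^ 2 * ((1 + s ^ 2) * (54 + 99 * s ^ 2 + 150 * s ^ 4 - s ^ 6 + 2 * s ^ 8)) := by
      have h4 := mul_lt_mul_of_pos_left hQ hc0
      have h5 : c * (c * (54 + 99 * s ^ 2 + 150 * s ^ 4 - s ^ 6 + 2 * s ^ 8))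
          = (1 + s ^ 2) * (54 + 99 * s ^ 2 + 150 * s ^ 4 - s ^ 6 + 2 * s ^ 8) := by
        rw [← mul_assoc, ← sq, hc]
      rw [h5] at h4
      exact mul_lt_mul_of_pos_left h4 (by positivity)
    have h7 : (2 + c) * (2 * c * (3 + 2 * s ^ 2 - s ^ 4)) * (s ^ 2 * (3 + s ^ 2) ^ 2)
        - (9 * (1 + s ^ 2) * (s * (3 + 6 * s ^ 2 + 7 * s ^ 4))) * (3 * s)
        - 9 * (1 + s ^ 2) * (2 + c) * (s ^ 2 * c * (3 - 2 * s ^ 2 - s ^ 4))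
        = s ^ 2 * (c * (2 * (27 + 63 * s ^ 2 + 39 * s ^ 4 + s ^ 6 - 2 * s ^ 8)))
          - s ^ 2 * ((1 + s ^ 2) * (54 + 99 * s ^ 2 + 150 * s ^ 4 - s ^ 6 + 2 * s ^ 8)) := by
      linear_combination (s ^ 2 * (27 + 63 * s ^ 2 + 39 * s ^ 4 + s ^ 6 - 2 * s ^ 8)) * hc
    calc 9 * (1 + s ^ 2) * (2 + c) *
        (2 * c * (3 + 2 * s ^ 2 - s ^ 4) * t ^ 2 - s * (3 + 6 * s ^ 2 + 7 * s ^ 4) * t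
          - s ^ 2 * c * (3 - 2 * s ^ 2 - s ^ 4))
        = (2 + c) * (2 * c * (3 + 2 * s ^ 2 - s ^ 4)) * (9 * (1 + s ^ 2) * t ^ 2)
          - (9 * (1 + s ^ 2) * (s * (3 + 6 * s ^ 2 + 7 * s ^ 4))) * (t * (2 + c))
          - 9 * (1 + s ^ 2) * (2 + c) * (s ^ 2 * c * (3 - 2 * s ^ 2 - s ^ 4)) := by ring
      _ ≤ (2 + c) * (2 * c * (3 + 2 * s ^ 2 - s ^ 4)) * (s ^ 2 * (3 + s ^ 2) ^ 2)
          - (9 * (1 + s ^ 2) * (s * (3 + 6 * s ^ 2 + 7 * s ^ 4))) * (3 * s)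
          - 9 * (1 + s ^ 2) * (2 + c) * (s ^ 2 * c * (3 - 2 * s ^ 2 - s ^ 4)) := by
        linarith [e1, e2]
      _ = s ^ 2 * (c * (2 * (27 + 63 * s ^ 2 + 39 * s ^ 4 + s ^ 6 - 2 * s ^ 8)))
          - s ^ 2 * ((1 + s ^ 2) * (54 + 99 * s ^ 2 + 150 * s ^ 4 - s ^ 6 + 2 * s ^ 8)) := h7
      _ < 0 := by linarith [e3]
  rcases mul_neg_iff.mp hmain with ⟨_, h⟩ | ⟨h, _⟩
  · exact h
  · linarith

private lemma hasDerivPhi {t : ℝ} (ht0 : 0 < t) :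
    HasDerivAt
      (fun t : ℝ => (3 - Real.cosh (2 * t)) * (Real.sinh (2 * t) - 2 * t) /
        (2 * t * Real.sinh t ^ 2 * (5 + Real.cosh (2 * t))))
      ((((0 - Real.sinh (2 * t) * 2) * (Real.sinh (2 * t) - 2 * t)
          + (3 - Real.cosh (2 * t)) * (Real.cosh (2 * t) * 2 - 2))
          * (2 * t * Real.sinh t ^ 2 * (5 + Real.cosh (2 * t)))
        - (3 - Real.cosh (2 * t)) * (Real.sinh (2 * t) - 2 * t)
          * ((2 * Real.sinh t ^ 2 + 2 * t * (2 * Real.sinh t * Real.cosh t))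
              * (5 + Real.cosh (2 * t))
            + 2 * t * Real.sinh t ^ 2 * (Real.sinh (2 * t) * 2)))
        / (2 * t * Real.sinh t ^ 2 * (5 + Real.cosh (2 * t))) ^ 2) t := by
  have hsp : 0 < Real.sinh t := Real.sinh_pos_iff.mpr ht0
  have hden : 2 * t * Real.sinh t ^ 2 * (5 + Real.cosh (2 * t)) ≠ 0 := by
    have h5 : (0:ℝ) < 5 + Real.cosh (2 * t) := by nlinarith [Real.cosh_pos (2 * t)]
    positivity
  have h2t : HasDerivAt (fun y : ℝ => 2 * y) 2 t := by
    simpa using (hasDerivAt_id t).const_mul (2:ℝ)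
  have hsinh2 : HasDerivAt (fun y : ℝ => Real.sinh (2 * y)) (Real.cosh (2 * t) * 2) t :=
    (Real.hasDerivAt_sinh (2 * t)).comp t h2t
  have hcosh2 : HasDerivAt (fun y : ℝ => Real.cosh (2 * y)) (Real.sinh (2 * t) * 2) t :=
    (Real.hasDerivAt_cosh (2 * t)).comp t h2t
  have hN := ((hasDerivAt_const t (3:ℝ)).sub hcosh2).mul (hsinh2.sub h2t)
  have hD := ((h2t.mul ((Real.hasDerivAt_sinh t).pow 2)).mul
    ((hasDerivAt_const t (5:ℝ)).add hcosh2))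
  have := hN.div hD hden
  refine this.congr_deriv ?_
  simp only [Pi.sub_apply, Pi.mul_apply, Pi.add_apply, Pi.pow_apply]
  push_cast
  ring

theorem stmt5 :
    StrictAntiOn
      (fun t : ℝ => (3 - Real.cosh (2 * t)) * (Real.sinh (2 * t) - 2 * t) /
        (2 * t * Real.sinh t ^ 2 * (5 + Real.cosh (2 * t))))
      (Set.Ioo 0 (Real.log (1 + Real.sqrt 2))) := by
  have hsl : Real.sinh (Real.log (1 + Real.sqrt 2)) = 1 := by
    have hpos : (0:ℝ) < 1 + Real.sqrt 2 := by positivity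
    rw [Real.sinh_log hpos]
    have h2 : Real.sqrt 2 ^ 2 = 2 := Real.sq_sqrt (by norm_num)
    have hne : (1 + Real.sqrt 2) ≠ 0 := ne_of_gt hpos
    field_simp
    nlinarith [h2, Real.sqrt_nonneg 2]
  apply strictAntiOn_of_deriv_neg (convex_Ioo _ _)
  · exact fun t ht => (hasDerivPhi ht.1).continuousAt.continuousWithinAt
  · intro t ht
    rw [isOpen_Ioo.interior_eq] at ht
    obtain ⟨ht0, ht1⟩ := ht
    rw [(hasDerivPhi ht0).deriv]
    have hsp : 0 < Real.sinh t := Real.sinh_pos_iff.mpr ht0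
    have hs1 : Real.sinh t < 1 := by
      rw [← hsl]; exact Real.sinh_lt_sinh.mpr ht1
    have h5 : (0:ℝ) < 5 + Real.cosh (2 * t) := by nlinarith [Real.cosh_pos (2 * t)]
    have hdpos : 0 < 2 * t * Real.sinh t ^ 2 * (5 + Real.cosh (2 * t)) := by positivity
    apply div_neg_of_neg_of_pos _ (by positivity)
    rw [Real.sinh_two_mul, Real.cosh_two_mul]
    set s := Real.sinh t with hsdef
    set c := Real.cosh t with hcdef
    have hc : c ^ 2 = 1 + s ^ 2 := Real.cosh_sq' t
    have hc1 : (1:ℝ) ≤ c := Real.one_le_cosh t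
    have key := keyB ht0 hsp hs1 hc hc1 (aux4 ht0.le) (aux5 ht0.le)
    have h16 : (0:ℝ) < 16 * s := by positivity
    refine lt_of_le_of_lt (le_of_eq ?_) (mul_neg_of_pos_of_neg h16 key)
    linear_combination (12 * s ^ 3 * c + 4 * s ^ 3 * c ^ 3 + 12 * s ^ 5 * c - 48 * t * s ^ 2
      + 12 * t * s ^ 2 * c ^ 2 + 4 * t * s ^ 2 * c ^ 4 - 108 * t * s ^ 4 + 8 * t * s ^ 4 * c ^ 2
      + 4 * t * s ^ 6 - 24 * t ^ 2 * s * c - 8 * t ^ 2 * s * c ^ 3 - 24 * t ^ 2 * s ^ 3 * c) * hc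
end

section
/- For all x ∈ (0,1), log(1+x²) - log(x/arsinh(x)) + (5/9)·[(1/2)·log(1-x²) - log(1+x²)] < 0. -/
open Real Set Filter Topology

private lemma arsinh_lower {x : ℝ} (hx0 : 0 ≤ x) (hx1 : x ≤ 1) :
    x - x ^ 3 / 6 ≤ Real.arsinh x := by
  have key : MonotoneOn (fun y : ℝ => Real.arsinh y - (y - y ^ 3 / 6)) (Set.Icc 0 1) := by
    apply monotoneOn_of_deriv_nonneg (convex_Icc 0 1)
    · exact (Real.continuous_arsinh.sub (by continuity)).continuousOn
    · intro y _
      exact ((Real.differentiable_arsinh y).sub (by fun_prop)).differentiableWithinAt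
    · intro y hy
      rw [interior_Icc] at hy
      have h2 : HasDerivAt (fun z : ℝ => z - z ^ 3 / 6) (1 - 3 * y ^ 2 / 6) y := by
        have h3 := (hasDerivAt_pow 3 y).div_const 6
        simpa [Pi.sub_def] using (hasDerivAt_id' y).sub h3
      have hd : HasDerivAt (fun z : ℝ => Real.arsinh z - (z - z ^ 3 / 6))
          ((Real.sqrt (1 + y ^ 2))⁻¹ - (1 - 3 * y ^ 2 / 6)) y :=
        (Real.hasDerivAt_arsinh y).sub h2
      rw [hd.deriv]
      have hs0 : 0 < Real.sqrt (1 + y ^ 2) := Real.sqrt_pos.2 (by positivity)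
      have hs2 : Real.sqrt (1 + y ^ 2) ^ 2 = 1 + y ^ 2 := Real.sq_sqrt (by positivity)
      have hsle : Real.sqrt (1 + y ^ 2) ≤ 1 + y ^ 2 / 2 := by nlinarith
      have h4 : (1 - 3 * y ^ 2 / 6) * Real.sqrt (1 + y ^ 2) ≤ 1 := by
        nlinarith [hy.1.le, hy.2.le, sq_nonneg y]
      rw [sub_nonneg, ← one_div, le_div_iff₀ hs0]
      linarith
  have h0 := key (Set.left_mem_Icc.2 zero_le_one) (Set.mem_Icc.2 ⟨hx0, hx1⟩) hx0
  simpa using h0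

private noncomputable def Fa : ℝ → ℝ := fun y => Real.log y - Real.log (Real.arsinh y)
    - 4 / 9 * Real.log (1 + y ^ 2) - 5 / 18 * Real.log (1 - y ^ 2)

private noncomputable def Da : ℝ → ℝ := fun y =>
    y⁻¹ - (Real.arsinh y)⁻¹ * (Real.sqrt (1 + y ^ 2))⁻¹
      - 4 / 9 * ((1 + y ^ 2)⁻¹ * (2 * y)) - 5 / 18 * ((1 - y ^ 2)⁻¹ * (-(2 * y)))

private lemma hasDerivAt_Fa {y : ℝ} (hy : y ∈ Set.Ioo (0 : ℝ) 1) : HasDerivAt Fa (Da y) y := by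
  obtain ⟨hy0, hy1⟩ := hy
  have hay : 0 < Real.arsinh y := Real.arsinh_pos_iff.2 hy0
  have h1 : HasDerivAt (fun z : ℝ => Real.log z) y⁻¹ y := Real.hasDerivAt_log hy0.ne'
  have h2 : HasDerivAt (fun z : ℝ => Real.log (Real.arsinh z))
      ((Real.arsinh y)⁻¹ * (Real.sqrt (1 + y ^ 2))⁻¹) y := by
    have := (Real.hasDerivAt_log hay.ne').comp y (Real.hasDerivAt_arsinh y)
    simpa [Function.comp_def] using this
  have hp1 : HasDerivAt (fun z : ℝ => 1 + z ^ 2) (2 * y) y := by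
    have := (hasDerivAt_pow 2 y).const_add 1
    simpa using this
  have hp2 : HasDerivAt (fun z : ℝ => 1 - z ^ 2) (-(2 * y)) y := by
    have := (hasDerivAt_pow 2 y).const_sub 1
    simpa using this
  have h3 : HasDerivAt (fun z : ℝ => Real.log (1 + z ^ 2)) ((1 + y ^ 2)⁻¹ * (2 * y)) y := by
    have := (Real.hasDerivAt_log (by positivity : (1 : ℝ) + y ^ 2 ≠ 0)).comp y hp1
    simpa [Function.comp_def] using this
  have h4 : HasDerivAt (fun z : ℝ => Real.log (1 - z ^ 2)) ((1 - y ^ 2)⁻¹ * (-(2 * y))) y := by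
    have hne : (1 : ℝ) - y ^ 2 ≠ 0 := by nlinarith
    have := (Real.hasDerivAt_log hne).comp y hp2
    simpa [Function.comp_def] using this
  exact ((h1.sub h2).sub (h3.const_mul (4 / 9))).sub (h4.const_mul (5 / 18))

private lemma Da_pos {y : ℝ} (hy : y ∈ Set.Ioo (0 : ℝ) 1) : 0 < Da y := by
  obtain ⟨hy0, hy1⟩ := hy
  have hay : 0 < Real.arsinh y := Real.arsinh_pos_iff.2 hy0
  have halow : y - y ^ 3 / 6 ≤ Real.arsinh y := arsinh_lower hy0.le hy1.le
  have hs0 : 0 < Real.sqrt (1 + y ^ 2) := Real.sqrt_pos.2 (by positivity)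
  have hs2 : Real.sqrt (1 + y ^ 2) ^ 2 = 1 + y ^ 2 := Real.sq_sqrt (by positivity)
  have hp : 0 < y - y ^ 3 / 6 := by nlinarith
  have hc : 0 < 9 - 3 * y ^ 2 + 4 * y ^ 4 := by nlinarith
  have h6 : 0 < y ^ 6 := by positivity
  have h4le : y ^ 4 ≤ 1 := pow_le_one₀ hy0.le hy1.le
  have h8le : y ^ 8 ≤ 1 := pow_le_one₀ hy0.le hy1.le
  have h10 : y ^ 10 ≤ y ^ 6 := by nlinarith [h6, h4le]
  have h14 : y ^ 14 ≤ y ^ 6 := by nlinarith [h6, h8le]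
  have hre : ((y - y ^ 3 / 6) * Real.sqrt (1 + y ^ 2) * (9 - 3 * y ^ 2 + 4 * y ^ 4)) ^ 2
      = (y - y ^ 3 / 6) ^ 2 * (1 + y ^ 2) * (9 - 3 * y ^ 2 + 4 * y ^ 4) ^ 2 := by
    rw [mul_pow, mul_pow, hs2]
    try ring
  have h1 : (9 * y * (1 - y ^ 4)) ^ 2
      < ((y - y ^ 3 / 6) * Real.sqrt (1 + y ^ 2) * (9 - 3 * y ^ 2 + 4 * y ^ 4)) ^ 2 := by
    rw [hre]
    nlinarith [h6, h10, h14, pow_nonneg hy0.le 8, pow_nonneg hy0.le 12, pow_nonneg hy0.le 16]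
  have h2 : 9 * y * (1 - y ^ 4)
      < (y - y ^ 3 / 6) * Real.sqrt (1 + y ^ 2) * (9 - 3 * y ^ 2 + 4 * y ^ 4) :=
    lt_of_pow_lt_pow_left₀ 2 (by positivity) h1
  have h3 : (y - y ^ 3 / 6) * Real.sqrt (1 + y ^ 2) * (9 - 3 * y ^ 2 + 4 * y ^ 4)
      ≤ Real.arsinh y * Real.sqrt (1 + y ^ 2) * (9 - 3 * y ^ 2 + 4 * y ^ 4) :=
    mul_le_mul_of_nonneg_right (mul_le_mul_of_nonneg_right halow hs0.le) hc.le
  have hkey : 9 * y * (1 - y ^ 4)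
      < Real.arsinh y * Real.sqrt (1 + y ^ 2) * (9 - 3 * y ^ 2 + 4 * y ^ 4) := lt_of_lt_of_le h2 h3
  have hy2 : (0 : ℝ) < 1 - y ^ 2 := by nlinarith
  have h1y : (0 : ℝ) < 1 + y ^ 2 := by positivity
  have hEq : Da y = (Real.arsinh y * Real.sqrt (1 + y ^ 2) * (9 - 3 * y ^ 2 + 4 * y ^ 4)
        - 9 * y * (1 - y ^ 4))
      / (9 * y * Real.arsinh y * Real.sqrt (1 + y ^ 2) * ((1 - y ^ 2) * (1 + y ^ 2))) := by
    simp only [Da]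
    field_simp
    ring
  rw [hEq]
  exact div_pos (by linarith) (by positivity)

theorem stmt6 (x : ℝ) (hx : x ∈ Set.Ioo (0 : ℝ) 1) :
    Real.log (1 + x ^ 2) - Real.log (x / Real.arsinh x) +
      (5 / 9) * ((1 / 2) * Real.log (1 - x ^ 2) - Real.log (1 + x ^ 2)) < 0 := by
  obtain ⟨hx0, hx1⟩ := hx
  have hax : 0 < Real.arsinh x := Real.arsinh_pos_iff.2 hx0
  have hmono : StrictMonoOn Fa (Set.Ioo 0 1) := by
    apply strictMonoOn_of_deriv_pos (convex_Ioo 0 1)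
    · exact fun y hy => (hasDerivAt_Fa hy).continuousAt.continuousWithinAt
    · intro y hy
      rw [interior_Ioo] at hy
      rw [(hasDerivAt_Fa hy).deriv]
      exact Da_pos hy
  have hlim : Tendsto Fa (𝓝[>] (0 : ℝ)) (𝓝 0) := by
    have h0 : HasDerivAt Real.arsinh 1 0 := by
      have := Real.hasDerivAt_arsinh 0
      norm_num at this
      exact this
    have h1 : Tendsto (fun y : ℝ => Real.arsinh y / y) (𝓝[>] 0) (𝓝 1) := by
      have hsl := hasDerivAt_iff_tendsto_slope.1 h0
      have hmle : 𝓝[>] (0 : ℝ) ≤ 𝓝[≠] (0 : ℝ) :=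
        nhdsWithin_mono 0 (fun y hy => ne_of_gt hy)
      refine (hsl.mono_left hmle).congr (fun y => ?_)
      simp [slope_def_field, Real.arsinh_zero, div_eq_inv_mul]
    have h2 : Tendsto (fun y : ℝ => Real.log (Real.arsinh y / y)) (𝓝[>] 0) (𝓝 0) := by
      have := (Real.continuousAt_log one_ne_zero).tendsto.comp h1
      simpa [Function.comp_def] using this
    have h4 : Tendsto (fun y : ℝ => Real.log (1 + y ^ 2)) (𝓝[>] 0) (𝓝 0) := by
      have hc : ContinuousAt (fun y : ℝ => Real.log (1 + y ^ 2)) 0 :=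
        ContinuousAt.log (by fun_prop) (by norm_num)
      have := hc.tendsto
      norm_num at this
      exact tendsto_nhdsWithin_of_tendsto_nhds this
    have h5 : Tendsto (fun y : ℝ => Real.log (1 - y ^ 2)) (𝓝[>] 0) (𝓝 0) := by
      have hc : ContinuousAt (fun y : ℝ => Real.log (1 - y ^ 2)) 0 :=
        ContinuousAt.log (by fun_prop) (by norm_num)
      have := hc.tendsto
      norm_num at this
      exact tendsto_nhdsWithin_of_tendsto_nhds this
    have hmain : Tendsto (fun y : ℝ => -Real.log (Real.arsinh y / y)
        - 4 / 9 * Real.log (1 + y ^ 2) - 5 / 18 * Real.log (1 - y ^ 2)) (𝓝[>] (0:ℝ)) (𝓝 0) := by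
      have := (h2.neg.sub (h4.const_mul (4 / 9))).sub (h5.const_mul (5 / 18))
      simpa [mul_comm] using this
    apply hmain.congr'
    filter_upwards [self_mem_nhdsWithin] with y hy
    have hy0 : (0 : ℝ) < y := hy
    have hay : 0 < Real.arsinh y := Real.arsinh_pos_iff.2 hy0
    simp only [Fa]
    rw [Real.log_div hay.ne' hy0.ne']
    ring
  have hmem : x / 2 ∈ Set.Ioo (0 : ℝ) 1 := ⟨by linarith, by linarith⟩
  have h1 : Fa (x / 2) < Fa x := hmono hmem ⟨hx0, hx1⟩ (by linarith)
  have h2 : 0 ≤ Fa (x / 2) := by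
    refine le_of_tendsto hlim ?_
    filter_upwards [Ioo_mem_nhdsGT_of_mem
      (show (0:ℝ) ∈ Set.Ico (0:ℝ) (x / 2) from ⟨le_refl 0, by linarith⟩)] with z hz
    exact (hmono ⟨hz.1, by linarith [hz.2]⟩ hmem hz.2).le
  have hfx : 0 < Real.log x - Real.log (Real.arsinh x)
      - 4 / 9 * Real.log (1 + x ^ 2) - 5 / 18 * Real.log (1 - x ^ 2) := by
    have : 0 < Fa x := by linarith
    simpa [Fa] using this
  rw [Real.log_div hx0.ne' hax.ne']
  linarith
end

section
/- For all x ∈ (0,1), log(1+x²) - log(x/arsinh(x)) > 0; equivalently, x/arsinh(x) < 1 + x² for x ∈ (0,1). -/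
lemma aux_key (x : ℝ) (hx : 0 < x) : x < (1 + x ^ 2) * Real.arsinh x := by
  set f : ℝ → ℝ := fun y => (1 + y ^ 2) * Real.arsinh y - y with hf
  have hderiv : ∀ y : ℝ, HasDerivAt f
      (2 * y * Real.arsinh y + (1 + y ^ 2) * (Real.sqrt (1 + y ^ 2))⁻¹ - 1) y := by
    intro y
    have h1 : HasDerivAt (fun y : ℝ => 1 + y ^ 2) (2 * y) y := by
      simpa using (hasDerivAt_pow 2 y).const_add (1:ℝ)
    have h2 := Real.hasDerivAt_arsinh y
    have := (h1.mul h2).sub (hasDerivAt_id y)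
    exact this
  have hmono : StrictMonoOn f (Set.Ici (0:ℝ)) := by
    apply strictMonoOn_of_deriv_pos (convex_Ici 0)
    · exact (((continuous_const.add (continuous_pow 2)).mul
        Real.continuous_arsinh).sub continuous_id).continuousOn
    · intro y hy
      rw [interior_Ici] at hy
      rw [(hderiv y).deriv]
      have hy0 : 0 < y := hy
      have harc : 0 < Real.arsinh y := Real.arsinh_pos_iff.mpr hy0
      have hsq : (1 + y ^ 2) * (Real.sqrt (1 + y ^ 2))⁻¹ = Real.sqrt (1 + y ^ 2) := by
        rw [← div_eq_mul_inv, Real.div_sqrt]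
      rw [hsq]
      have h1 : (1:ℝ) ≤ Real.sqrt (1 + y ^ 2) := Real.one_le_sqrt.mpr (by nlinarith)
      nlinarith
  have h0 : f 0 = 0 := by simp [hf]
  have := hmono (Set.self_mem_Ici) (Set.mem_Ici.mpr hx.le) hx
  rw [h0] at this
  simp only [hf] at this
  linarith

theorem stmt7 (x : ℝ) (hx : x ∈ Set.Ioo (0 : ℝ) 1) :
    0 < Real.log (1 + x ^ 2) - Real.log (x / Real.arsinh x) ∧
    x / Real.arsinh x < 1 + x ^ 2 := by
  obtain ⟨hx0, hx1⟩ := hx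
  have harc : 0 < Real.arsinh x := Real.arsinh_pos_iff.mpr hx0
  have hkey := aux_key x hx0
  have hlt : x / Real.arsinh x < 1 + x ^ 2 := (div_lt_iff₀ harc).mpr (by linarith)
  refine ⟨?_, hlt⟩
  have hpos : 0 < x / Real.arsinh x := div_pos hx0 harc
  have := Real.log_lt_log hpos hlt
  linarith
end

section
/- For all x ∈ (0,1), x(1+x²) - (1-x²)·sqrt(1+x²)·arsinh(x) > 0. -/
theorem stmt8 (x : ℝ) (hx : x ∈ Set.Ioo (0 : ℝ) 1) :
    0 < x * (1 + x ^ 2) - (1 - x ^ 2) * Real.sqrt (1 + x ^ 2) * Real.arsinh x := by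
  obtain ⟨hx0, hx1⟩ := hx
  have h1 : Real.arsinh x < x := by
    have h := Real.self_lt_sinh_iff.mpr hx0
    calc Real.arsinh x < Real.arsinh (Real.sinh x) := Real.arsinh_lt_arsinh.mpr h
    _ = x := Real.arsinh_sinh x
  have hs : Real.sqrt (1 + x ^ 2) ^ 2 = 1 + x ^ 2 := Real.sq_sqrt (by positivity)
  have hs1 : 1 ≤ Real.sqrt (1 + x ^ 2) := by
    exact Real.one_le_sqrt.mpr (by nlinarith)
  have ha : 0 < Real.arsinh x := Real.arsinh_pos_iff.mpr hx0
  nlinarith [sq_nonneg x, mul_pos hx0 hx0, sq_nonneg (Real.sqrt (1 + x ^ 2) - 1),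
    mul_pos (mul_pos hx0 hx0) (lt_of_lt_of_le one_pos hs1)]
end

section
/- For all x ∈ (0,1), x·(49x² - 3)·sqrt(1+x²) + (3 + 7x² + 20x⁴)·arsinh(x) > 0. -/
lemma arsinh_ge_div (x : ℝ) (hx : 0 ≤ x) :
    x / Real.sqrt (1 + x ^ 2) ≤ Real.arsinh x := by
  set g : ℝ → ℝ := fun y => Real.arsinh y - y / Real.sqrt (1 + y ^ 2) with hg
  have hderiv : ∀ y : ℝ, HasDerivAt g
      ((Real.sqrt (1 + y ^ 2))⁻¹ -
        (1 * Real.sqrt (1 + y ^ 2) - y * (2 * y / (2 * Real.sqrt (1 + y ^ 2)))) /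
          (Real.sqrt (1 + y ^ 2)) ^ 2) y := by
    intro y
    have hpos : (0:ℝ) < 1 + y ^ 2 := by positivity
    have hs : 0 < Real.sqrt (1 + y ^ 2) := Real.sqrt_pos.mpr hpos
    have h1 : HasDerivAt Real.arsinh (Real.sqrt (1 + y ^ 2))⁻¹ y :=
      Real.hasDerivAt_arsinh y
    have hu : HasDerivAt (fun z : ℝ => 1 + z ^ 2) (2 * y) y := by
      simpa using ((hasDerivAt_pow 2 y).const_add 1)
    have hsq : HasDerivAt (fun z : ℝ => Real.sqrt (1 + z ^ 2))
        (2 * y / (2 * Real.sqrt (1 + y ^ 2))) y := hu.sqrt hpos.ne'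
    have h2 : HasDerivAt (fun z : ℝ => z / Real.sqrt (1 + z ^ 2))
        ((1 * Real.sqrt (1 + y ^ 2) - y * (2 * y / (2 * Real.sqrt (1 + y ^ 2)))) /
          (Real.sqrt (1 + y ^ 2)) ^ 2) y :=
      (hasDerivAt_id y).div hsq hs.ne'
    exact h1.sub h2
  have hmono : Monotone g := by
    apply monotone_of_deriv_nonneg
    · exact fun y => ((hderiv y).differentiableAt)
    · intro y
      rw [(hderiv y).deriv]
      have hpos : (0:ℝ) < 1 + y ^ 2 := by positivity
      have hs : 0 < Real.sqrt (1 + y ^ 2) := Real.sqrt_pos.mpr hpos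
      have hs2 : Real.sqrt (1 + y ^ 2) ^ 2 = 1 + y ^ 2 := Real.sq_sqrt hpos.le
      have : (Real.sqrt (1 + y ^ 2))⁻¹ -
          (1 * Real.sqrt (1 + y ^ 2) - y * (2 * y / (2 * Real.sqrt (1 + y ^ 2)))) /
            (Real.sqrt (1 + y ^ 2)) ^ 2
          = y ^ 2 / (Real.sqrt (1 + y ^ 2)) ^ 3 := by
        field_simp
        ring
      rw [this]
      positivity
  have h0 : g 0 = 0 := by simp [hg]
  have := hmono hx
  rw [h0] at this
  simpa [hg, sub_nonneg] using this

theorem stmt9 (x : ℝ) (hx : x ∈ Set.Ioo (0 : ℝ) 1) :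
    0 < x * (49 * x ^ 2 - 3) * Real.sqrt (1 + x ^ 2) +
      (3 + 7 * x ^ 2 + 20 * x ^ 4) * Real.arsinh x := by
  obtain ⟨hx0, hx1⟩ := hx
  have hpos : (0:ℝ) < 1 + x ^ 2 := by positivity
  have hs : 0 < Real.sqrt (1 + x ^ 2) := Real.sqrt_pos.mpr hpos
  have hs2 : Real.sqrt (1 + x ^ 2) ^ 2 = 1 + x ^ 2 := Real.sq_sqrt hpos.le
  have key : x / Real.sqrt (1 + x ^ 2) ≤ Real.arsinh x := arsinh_ge_div x hx0.le
  have key' : x ≤ Real.arsinh x * Real.sqrt (1 + x ^ 2) :=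
    (div_le_iff₀ hs).mp key
  nlinarith [mul_pos hx0 hs, sq_nonneg x, mul_pos (mul_pos hx0 hx0) hx0,
    mul_le_mul_of_nonneg_left key' (by positivity : (0:ℝ) ≤ 3 + 7 * x ^ 2 + 20 * x ^ 4),
    hs, hs2]
end

section
/- The function 3·sinh(2t) - 6t + 2t·cosh(2t) - (1/2)·sinh(4t) has the power series expansion Σ_{n≥1} [2^(2n+1)·(2n+4-2^(2n))/(2n+1)!]·t^(2n+1) for all real t. -/
theorem stmt11 (t : ℝ) :
    HasSum
      (fun n : ℕ =>
        2 ^ (2 * (n + 1) + 1) * ((2 * (n + 1) + 4 : ℝ) - 2 ^ (2 * (n + 1))) /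
          (Nat.factorial (2 * (n + 1) + 1)) * t ^ (2 * (n + 1) + 1))
      (3 * Real.sinh (2 * t) - 6 * t + 2 * t * Real.cosh (2 * t) -
        (1 / 2) * Real.sinh (4 * t)) := by
  have hf : HasSum
      (fun n : ℕ => 3 * ((2*t) ^ (2*n+1) / (Nat.factorial (2*n+1)))
        + 2*t * ((2*t) ^ (2*n) / (Nat.factorial (2*n)))
        - 1/2 * ((4*t) ^ (2*n+1) / (Nat.factorial (2*n+1))))
      (3 * Real.sinh (2*t) + 2*t * Real.cosh (2*t) - 1/2 * Real.sinh (4*t)) :=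
    (((Real.hasSum_sinh (2*t)).mul_left 3).add
      ((Real.hasSum_cosh (2*t)).mul_left (2*t))).sub
      ((Real.hasSum_sinh (4*t)).mul_left (1/2))
  have h := (hasSum_nat_add_iff' 1).2 hf
  have hfun : ∀ n : ℕ,
      3 * ((2*t) ^ (2*(n+1)+1) / (Nat.factorial (2*(n+1)+1)))
        + 2*t * ((2*t) ^ (2*(n+1)) / (Nat.factorial (2*(n+1))))
        - 1/2 * ((4*t) ^ (2*(n+1)+1) / (Nat.factorial (2*(n+1)+1)))
      = 2 ^ (2 * (n + 1) + 1) * ((2 * (n + 1) + 4 : ℝ) - 2 ^ (2 * (n + 1))) /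
          (Nat.factorial (2 * (n + 1) + 1)) * t ^ (2 * (n + 1) + 1) := by
    intro n
    set m := n + 1
    have h1 : (Nat.factorial (2*m+1) : ℝ) = (2*m+1) * Nat.factorial (2*m) := by
      rw [Nat.factorial_succ]; push_cast; ring
    have h2 : (Nat.factorial (2*m) : ℝ) ≠ 0 := by positivity
    have h3 : ((2*m+1 : ℕ) : ℝ) ≠ 0 := by positivity
    rw [show (4:ℝ) = 2^2 by norm_num] at *
    rw [mul_pow, mul_pow, mul_pow, ← pow_mul, h1]
    field_simp
    push_cast
    simp only [m]; push_cast; ring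
  have hsum : (3 * Real.sinh (2*t) + 2*t * Real.cosh (2*t) - 1/2 * Real.sinh (4*t))
      - ∑ i ∈ Finset.range 1,
        (3 * ((2*t) ^ (2*i+1) / (Nat.factorial (2*i+1)))
        + 2*t * ((2*t) ^ (2*i) / (Nat.factorial (2*i)))
        - 1/2 * ((4*t) ^ (2*i+1) / (Nat.factorial (2*i+1))))
      = 3 * Real.sinh (2 * t) - 6 * t + 2 * t * Real.cosh (2 * t) -
        (1 / 2) * Real.sinh (4 * t) := by
    simp [Nat.factorial]
    ring
  rw [hsum] at h
  exact h.congr_fun (fun n => (hfun n).symm)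
end
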